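/- A fixed point with the small cycle property is indifferent: let U ⊆ ℂ be open, f analytic on U, z₀ ∈ U with f(z₀) = z₀. Assume f has the small cycle property at z₀, i.e. for every ε > 0 there exist an integer p ≥ 1 and a point w ≠ z₀ with f^p(w) = w and f^i(w) ∈ B(z₀, ε) for all 0 ≤ i < p. Then |f′(z₀)| = 1. -/

import Mathlib

/-- Linearization bound: near a fixed point, `|f z - z₀|` is within `δ|z-z₀|` of
`|d| |z-z₀|` where `d` is the derivative. -/
lemma small_cycles_aux (f : ℂ → ℂ) (z₀ d : ℂ) (hd : HasDerivAt f d z₀)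
    (hfix : f z₀ = z₀) (δ : ℝ) (hδ : 0 < δ) :
    ∃ ε > 0, ∀ z ∈ Metric.ball z₀ ε,
      ‖f z - z₀‖ ≤ (‖d‖ + δ) * ‖z - z₀‖ ∧
      (‖d‖ - δ) * ‖z - z₀‖ ≤ ‖f z - z₀‖ := by
  have h := (hasDerivAt_iff_isLittleO.mp hd).bound hδ
  rw [Metric.eventually_nhds_iff] at h
  obtain ⟨ε, hε, H⟩ := h
  refine ⟨ε, hε, fun z hz => ?_⟩
  have hz' := H (Metric.mem_ball.mp hz)
  simp only [hfix, smul_eq_mul] at hz'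
  have habs : ‖(z - z₀) * d‖ = ‖d‖ * ‖z - z₀‖ := by
    rw [norm_mul]; ring
  constructor
  · have : ‖f z - z₀‖ ≤ ‖(z - z₀) * d‖
        + ‖f z - z₀ - (z - z₀) * d‖ := by
      have := norm_add_le ((z - z₀) * d) (f z - z₀ - (z - z₀) * d)
      simpa using this
    calc ‖f z - z₀‖ ≤ ‖d‖ * ‖z - z₀‖
          + δ * ‖z - z₀‖ := by
          rw [← habs]; exact this.trans (by linarith)
      _ = (‖d‖ + δ) * ‖z - z₀‖ := by ring
  · have : ‖(z - z₀) * d‖ ≤ ‖f z - z₀‖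
        + ‖f z - z₀ - (z - z₀) * d‖ := by
      have := norm_sub_le (f z - z₀) ((z - z₀) * d)
      have h2 := norm_add_le (f z - z₀) ((z - z₀) * d - (f z - z₀))
      calc ‖(z - z₀) * d‖
          = ‖f z - z₀ + ((z - z₀) * d - (f z - z₀))‖ := by ring_nf
        _ ≤ ‖f z - z₀‖ + ‖(z - z₀) * d - (f z - z₀)‖ := h2
        _ = ‖f z - z₀‖ + ‖f z - z₀ - (z - z₀) * d‖ := by
            rw [← norm_neg ((z - z₀) * d - (f z - z₀))]; ring_nf
    rw [habs] at this
    linarith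

/-- A fixed point with the small cycle property is indifferent: if `f` is analytic on
open `U`, `f z₀ = z₀`, and every neighborhood of `z₀` contains a periodic cycle of `f`
avoiding `z₀`, then `|f'(z₀)| = 1`. -/
theorem small_cycles_implies_indifferent (U : Set ℂ) (hU : IsOpen U) (f : ℂ → ℂ)
    (hf : AnalyticOnNhd ℂ f U) (z₀ : ℂ) (hz₀ : z₀ ∈ U) (hfix : f z₀ = z₀)
    (hsc : ∀ ε > 0, ∃ p : ℕ, 1 ≤ p ∧ ∃ w : ℂ, w ≠ z₀ ∧ f^[p] w = w ∧
      ∀ i < p, f^[i] w ∈ Metric.ball z₀ ε) :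
    ‖deriv f z₀‖ = 1 := by
  set d := deriv f z₀ with hdd
  have hder : HasDerivAt f d z₀ := ((hf z₀ hz₀).differentiableAt).hasDerivAt
  by_contra hne
  rcases lt_or_gt_of_ne hne with hlt | hgt
  · -- attracting case
    set δ := (1 - ‖d‖) / 2 with hδdef
    have hδ : 0 < δ := by simp only [hδdef]; linarith
    obtain ⟨ε, hε, H⟩ := small_cycles_aux f z₀ d hder hfix δ hδ
    obtain ⟨p, hp, w, hw, hper, hball⟩ := hsc ε hε
    set c := ‖d‖ + δ with hcdef
    have hc0 : 0 ≤ c := by positivity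
    have hc1 : c < 1 := by
      have := norm_nonneg d
      simp only [hcdef, hδdef]; linarith
    have key : ∀ i ≤ p, ‖f^[i] w - z₀‖ ≤ c ^ i * ‖w - z₀‖ := by
      intro i hi
      induction i with
      | zero => simp
      | succ n ih =>
        have hn : n < p := Nat.lt_of_succ_le hi
        have hmem := hball n hn
        have h1 := (H _ hmem).1
        rw [Function.iterate_succ_apply']
        calc ‖f (f^[n] w) - z₀‖ ≤ c * ‖f^[n] w - z₀‖ := h1
          _ ≤ c * (c ^ n * ‖w - z₀‖) := by
              exact mul_le_mul_of_nonneg_left (ih (le_of_lt hn)) hc0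
          _ = c ^ (n + 1) * ‖w - z₀‖ := by ring
    have hwpos : 0 < ‖w - z₀‖ := by
      simpa [sub_eq_zero] using hw
    have := key p le_rfl
    rw [hper] at this
    have hcp : c ^ p < 1 := pow_lt_one₀ hc0 hc1 (by omega)
    nlinarith
  · -- repelling case
    set δ := (‖d‖ - 1) / 2 with hδdef
    have hδ : 0 < δ := by simp only [hδdef]; linarith
    obtain ⟨ε, hε, H⟩ := small_cycles_aux f z₀ d hder hfix δ hδ
    obtain ⟨p, hp, w, hw, hper, hball⟩ := hsc ε hε
    set c := ‖d‖ - δ with hcdef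
    have hc1 : 1 < c := by simp only [hcdef, hδdef]; linarith
    have hc0 : 0 ≤ c := by linarith
    have key : ∀ i ≤ p, c ^ i * ‖w - z₀‖ ≤ ‖f^[i] w - z₀‖ := by
      intro i hi
      induction i with
      | zero => simp
      | succ n ih =>
        have hn : n < p := Nat.lt_of_succ_le hi
        have hmem := hball n hn
        have h1 := (H _ hmem).2
        rw [Function.iterate_succ_apply']
        calc c ^ (n + 1) * ‖w - z₀‖
            = c * (c ^ n * ‖w - z₀‖) := by ring
          _ ≤ c * ‖f^[n] w - z₀‖ :=
              mul_le_mul_of_nonneg_left (ih (le_of_lt hn)) hc0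
          _ ≤ ‖f (f^[n] w) - z₀‖ := h1
    have hwpos : 0 < ‖w - z₀‖ := by
      simpa [sub_eq_zero] using hw
    have := key p le_rfl
    rw [hper] at this
    have hcp : 1 < c ^ p := one_lt_pow₀ hc1 (by omega)
    nlinarith
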